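/- Let V be a complex Hilbert space, B a bounded, modulus-coercive sesquilinear form on V, π : V → V a continuous linear projection with range V_H and kernel W, K : V_H → W the ideal corrector, and F a continuous antilinear functional on V. Then there exists a unique u_H⁰ ∈ V_H satisfying the ideal numerically homogenized equation B((I + K)(u_H⁰), (I + K)(v)) = F((I + K)(v)) for all v ∈ V_H. -/

import Mathlib

/-- **Well-posedness of the ideal numerically homogenized equation.** Let `π`
be a continuous linear projection on a complex Hilbert space `V` with range
`V_H` and kernel `W`, let `B` be a bounded modulus-coercive sesquilinear form,
`K` the ideal corrector and `F` a continuous antilinear functional. Then there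
exists a unique `u_H⁰ ∈ V_H` with
`B ((I + K) u_H⁰) ((I + K) v) = F ((I + K) v)` for all `v ∈ V_H`. -/
theorem ideal_homogenized_equation_wellposed
    {V : Type*} [NormedAddCommGroup V] [InnerProductSpace ℂ V] [CompleteSpace V]
    (B : V → V → ℂ) (C_B α : ℝ) (hC_B : 0 < C_B) (hα : 0 < α)
    (hadd₁ : ∀ u v w : V, B (u + v) w = B u w + B v w)
    (hsmul₁ : ∀ (c : ℂ) (u w : V), B (c • u) w = c * B u w)
    (hadd₂ : ∀ u v w : V, B u (v + w) = B u v + B u w)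
    (hsmul₂ : ∀ (c : ℂ) (u w : V), B u (c • w) = (starRingEnd ℂ) c * B u w)
    (hbound : ∀ u v : V, ‖B u v‖ ≤ C_B * ‖u‖ * ‖v‖)
    (hcoer : ∀ v : V, α * ‖v‖ ^ 2 ≤ ‖B v v‖)
    (π : V →L[ℂ] V) (hπ : ∀ v : V, π (π v) = π v)
    (K : V → V)
    (hK₀ : ∀ vH ∈ Set.range π, π (K vH) = 0)
    (hK : ∀ vH ∈ Set.range π, ∀ w : V, π w = 0 → B (K vH) w = -(B vH w))
    (F : V →L⋆[ℂ] ℂ) :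
    ∃! uH0 : V, uH0 ∈ Set.range π ∧
      ∀ v ∈ Set.range π, B (uH0 + K uH0) (v + K v) = F (v + K v) := by
  classical
  -- elementary consequences of sesquilinearity
  have hzero₁ : ∀ w : V, B 0 w = 0 := by
    intro w
    have h := hsmul₁ 0 0 w
    simpa using h
  have hneg₁ : ∀ u w : V, B (-u) w = -(B u w) := by
    intro u w
    have h := hsmul₁ (-1) u w
    simpa using h
  have hsub₁ : ∀ u v w : V, B (u - v) w = B u w - B v w := by
    intro u v w
    rw [sub_eq_add_neg, hadd₁, hneg₁, sub_eq_add_neg]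
  -- fixed points of π
  have hfix : ∀ v ∈ Set.range π, π v = v := by
    rintro v ⟨x, rfl⟩; exact hπ x
  -- uniqueness in W = ker π
  have hWzero : ∀ w : V, (∀ w' : V, π w' = 0 → B w w' = 0) → π w = 0 → w = 0 := by
    intro w h hw
    have h1 : α * ‖w‖ ^ 2 ≤ 0 := by
      have h2 := hcoer w
      rwa [h w hw, norm_zero] at h2
    have h2 : ‖w‖ ^ 2 = 0 := le_antisymm (by nlinarith) (sq_nonneg _)
    rwa [pow_eq_zero_iff two_ne_zero, norm_eq_zero] at h2
  -- K vanishes at 0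
  have hzeroR : (0 : V) ∈ Set.range π := ⟨0, map_zero π⟩
  have hK_zero : K 0 = 0 := by
    refine hWzero _ (fun w' hw' => ?_) (hK₀ 0 hzeroR)
    rw [hK 0 hzeroR w' hw', hzero₁, neg_zero]
  -- K is additive on range π
  have hK_add : ∀ v₁ ∈ Set.range π, ∀ v₂ ∈ Set.range π, K (v₁ + v₂) = K v₁ + K v₂ := by
    intro v₁ hv₁ v₂ hv₂
    have hs : v₁ + v₂ ∈ Set.range π := ⟨v₁ + v₂, by rw [map_add, hfix _ hv₁, hfix _ hv₂]⟩
    have h0 : π (K (v₁ + v₂) - (K v₁ + K v₂)) = 0 := by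
      rw [map_sub, map_add, hK₀ _ hs, hK₀ _ hv₁, hK₀ _ hv₂]; abel
    have h := hWzero (K (v₁ + v₂) - (K v₁ + K v₂)) (fun w' hw' => ?_) h0
    · exact sub_eq_zero.mp h
    · rw [hsub₁, hadd₁, hK _ hs _ hw', hK _ hv₁ _ hw', hK _ hv₂ _ hw', hadd₁]
      ring
  -- K is homogeneous on range π
  have hK_smul : ∀ (c : ℂ), ∀ v ∈ Set.range π, K (c • v) = c • K v := by
    intro c v hv
    have hs : c • v ∈ Set.range π := ⟨c • v, by rw [map_smul, hfix _ hv]⟩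
    have h0 : π (K (c • v) - c • K v) = 0 := by
      rw [map_sub, map_smul, hK₀ _ hs, hK₀ _ hv, smul_zero, sub_zero]
    have h := hWzero (K (c • v) - c • K v) (fun w' hw' => ?_) h0
    · exact sub_eq_zero.mp h
    · rw [hsub₁, hsmul₁, hK _ hs _ hw', hK _ hv _ hw', hsmul₁]
      ring
  -- K is bounded on range π
  have hK_bound : ∀ v ∈ Set.range π, ‖K v‖ ≤ (C_B / α) * ‖v‖ := by
    intro v hv
    have h1 : α * ‖K v‖ ^ 2 ≤ ‖B (K v) (K v)‖ := hcoer _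
    have h2 : B (K v) (K v) = -(B v (K v)) := hK v hv _ (hK₀ v hv)
    rw [h2, norm_neg] at h1
    have h3 : ‖B v (K v)‖ ≤ C_B * ‖v‖ * ‖K v‖ := hbound _ _
    rcases eq_or_lt_of_le (norm_nonneg (K v)) with h0 | h0
    · rw [← h0]
      positivity
    · rw [div_mul_eq_mul_div, le_div_iff₀ hα]
      nlinarith
  -- the correction operator G = π + K ∘ π as a continuous linear map
  let Glin : V →ₗ[ℂ] V :=
    { toFun := fun u => π u + K (π u)
      map_add' := by
        intro u v
        simp only [map_add]
        rw [hK_add (π u) ⟨u, rfl⟩ (π v) ⟨v, rfl⟩]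
        abel
      map_smul' := by
        intro c u
        simp only [map_smul, RingHom.id_apply]
        rw [hK_smul c (π u) ⟨u, rfl⟩, smul_add] }
  have hGbound : ∀ u : V, ‖Glin u‖ ≤ ((1 + C_B / α) * ‖π‖) * ‖u‖ := by
    intro u
    have h1 : ‖π u + K (π u)‖ ≤ ‖π u‖ + ‖K (π u)‖ := norm_add_le _ _
    have h2 : ‖K (π u)‖ ≤ (C_B / α) * ‖π u‖ := hK_bound _ ⟨u, rfl⟩
    have h3 : ‖π u‖ ≤ ‖π‖ * ‖u‖ := π.le_opNorm u
    have h4 : (0 : ℝ) < C_B / α := div_pos hC_B hα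
    calc ‖Glin u‖ = ‖π u + K (π u)‖ := rfl
      _ ≤ (1 + C_B / α) * ‖π u‖ := by nlinarith
      _ ≤ ((1 + C_B / α) * ‖π‖) * ‖u‖ := by rw [mul_assoc]; nlinarith
  let G : V →L[ℂ] V := Glin.mkContinuous _ hGbound
  have hGapp : ∀ u : V, G u = π u + K (π u) := fun u => rfl
  -- the multiscale space M = (I + K) (range π)
  let M : Submodule ℂ V :=
    { carrier := {u : V | π u + K (π u) = u}
      add_mem' := by
        intro a b ha hb
        simp only [Set.mem_setOf_eq] at *
        simp only [map_add]
        rw [hK_add (π a) ⟨a, rfl⟩ (π b) ⟨b, rfl⟩]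
        rw [show π a + π b + (K (π a) + K (π b)) = (π a + K (π a)) + (π b + K (π b)) by abel,
          ha, hb]
      zero_mem' := by
        simp only [Set.mem_setOf_eq, map_zero, hK_zero, add_zero]
      smul_mem' := by
        intro c a ha
        simp only [Set.mem_setOf_eq] at *
        rw [map_smul, hK_smul c (π a) ⟨a, rfl⟩, ← smul_add, ha] }
  have hMclosed : IsClosed (M : Set V) := by
    have : (M : Set V) = {u : V | G u = u} := rfl
    rw [this]
    exact isClosed_eq G.continuous continuous_id
  haveI : CompleteSpace M := hMclosed.completeSpace_coe
  -- membership lemmas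
  have hmemM : ∀ v ∈ Set.range π, v + K v ∈ M := by
    intro v hv
    have hπv : π (v + K v) = v := by rw [map_add, hfix _ hv, hK₀ _ hv, add_zero]
    show π (v + K v) + K (π (v + K v)) = v + K v
    rw [hπv]
  have hMfix : ∀ u : V, u ∈ M → π u + K (π u) = u := fun u hu => hu
  -- the sesquilinear form (x, y) ↦ conj (B x y) on M, as a continuous map
  let blin : M →ₗ⋆[ℂ] M →ₗ[ℂ] ℂ :=
    LinearMap.mk₂'ₛₗ (starRingEnd ℂ) (RingHom.id ℂ)
      (fun x y => (starRingEnd ℂ) (B (x : V) (y : V)))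
      (by intro m₁ m₂ n
          show (starRingEnd ℂ) (B ((m₁ : V) + (m₂ : V)) (n : V))
              = (starRingEnd ℂ) (B (m₁ : V) (n : V)) + (starRingEnd ℂ) (B (m₂ : V) (n : V))
          rw [hadd₁, map_add])
      (by intro c m n
          show (starRingEnd ℂ) (B (c • (m : V)) (n : V))
              = (starRingEnd ℂ) c * (starRingEnd ℂ) (B (m : V) (n : V))
          rw [hsmul₁, map_mul])
      (by intro m n₁ n₂
          show (starRingEnd ℂ) (B (m : V) ((n₁ : V) + (n₂ : V)))
              = (starRingEnd ℂ) (B (m : V) (n₁ : V)) + (starRingEnd ℂ) (B (m : V) (n₂ : V))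
          rw [hadd₂, map_add])
      (by intro c m n
          show (starRingEnd ℂ) (B (m : V) (c • (n : V)))
              = c * (starRingEnd ℂ) (B (m : V) (n : V))
          rw [hsmul₂, map_mul, Complex.conj_conj])
  have hblin : ∀ x y : M, blin x y = (starRingEnd ℂ) (B (x : V) (y : V)) := fun x y => rfl
  let b : M →L⋆[ℂ] M →L[ℂ] ℂ := blin.mkContinuous₂ C_B (by
    intro x y
    rw [hblin]
    calc ‖(starRingEnd ℂ) (B (x : V) (y : V))‖ = ‖B (x : V) (y : V)‖ := RCLike.norm_conj _
      _ ≤ C_B * ‖(x : V)‖ * ‖(y : V)‖ := hbound _ _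
      _ = C_B * ‖x‖ * ‖y‖ := rfl)
  have hb : ∀ x y : M, b x y = (starRingEnd ℂ) (B (x : V) (y : V)) := fun x y => rfl
  let A : M →L[ℂ] M := InnerProductSpace.continuousLinearMapOfBilin b
  have hA : ∀ x y : M, inner ℂ (A x) y = (starRingEnd ℂ) (B (x : V) (y : V)) := by
    intro x y
    rw [InnerProductSpace.continuousLinearMapOfBilin_apply]
    exact hb x y
  -- A is bounded below
  have hAbelow : ∀ x : M, α * ‖x‖ ≤ ‖A x‖ := by
    intro x
    rcases eq_or_lt_of_le (norm_nonneg x) with h0 | h0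
    · rw [← h0, mul_zero]; exact norm_nonneg _
    · have h1 : α * ‖x‖ ^ 2 ≤ ‖B (x : V) (x : V)‖ := hcoer (x : V)
      have h2 : ‖B (x : V) (x : V)‖ = ‖inner ℂ (A x) x‖ := by
        rw [hA, RCLike.norm_conj]
      have h3 : ‖inner ℂ (A x) x‖ ≤ ‖A x‖ * ‖x‖ := norm_inner_le_norm _ _
      rw [h2] at h1
      nlinarith
  have hAinj : Function.Injective A := by
    intro x y hxy
    have h1 : α * ‖x - y‖ ≤ ‖A (x - y)‖ := hAbelow _
    rw [map_sub, hxy, sub_self, norm_zero] at h1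
    have : ‖x - y‖ ≤ 0 := by nlinarith
    have : x - y = 0 := by
      rw [← norm_eq_zero]; exact le_antisymm this (norm_nonneg _)
    exact sub_eq_zero.mp this
  -- A is surjective
  have hAanti : AntilipschitzWith (⟨α, hα.le⟩ : NNReal)⁻¹ A := by
    refine ContinuousLinearMap.antilipschitz_of_bound A (fun x => ?_)
    have hcoe : (((⟨α, hα.le⟩ : NNReal)⁻¹ : NNReal) : ℝ) = α⁻¹ := by
      exact NNReal.coe_inv _
    rw [hcoe, ← mul_le_mul_iff_right₀ hα, ← mul_assoc, mul_inv_cancel₀ hα.ne', one_mul]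
    exact hAbelow x
  have hArangeClosed : IsClosed (Set.range A) := hAanti.isClosed_range A.uniformContinuous
  have hArange : LinearMap.range (A : M →ₗ[ℂ] M) = ⊤ := by
    have hcl : IsClosed ((LinearMap.range (A : M →ₗ[ℂ] M) : Submodule ℂ M) : Set M) := by
      rwa [LinearMap.coe_range]
    haveI := hcl.completeSpace_coe
    rw [← (LinearMap.range (A : M →ₗ[ℂ] M)).orthogonal_orthogonal]
    rw [Submodule.eq_top_iff']
    intro v w hw
    have hw0 : w = 0 := by
      have h1 : inner ℂ (A w) w = 0 := hw (A w) (LinearMap.mem_range_self _ w)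
      have h2 : α * ‖w‖ ^ 2 ≤ 0 := by
        have h3 := hcoer (w : V)
        have h4 : ‖B (w : V) (w : V)‖ = 0 := by
          rw [← RCLike.norm_conj, ← hA, h1, norm_zero]
        rw [h4] at h3
        exact h3
      have : ‖w‖ ^ 2 = 0 := le_antisymm (by nlinarith) (sq_nonneg _)
      rwa [pow_eq_zero_iff two_ne_zero, norm_eq_zero] at this
    rw [hw0]
    exact inner_zero_left _
  -- the right-hand side functional z ↦ conj (F z) on M
  let glin : M →ₗ[ℂ] ℂ :=
    { toFun := fun z => (starRingEnd ℂ) (F (z : V))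
      map_add' := by
        intro z z'
        show (starRingEnd ℂ) (F ((z : V) + (z' : V)))
            = (starRingEnd ℂ) (F (z : V)) + (starRingEnd ℂ) (F (z' : V))
        rw [map_add, map_add]
      map_smul' := by
        intro c z
        show (starRingEnd ℂ) (F (c • (z : V))) = c * (starRingEnd ℂ) (F (z : V))
        rw [ContinuousLinearMap.map_smulₛₗ, smul_eq_mul, map_mul, Complex.conj_conj] }
  let g : M →L[ℂ] ℂ := glin.mkContinuous ‖F‖ (by
    intro z
    calc ‖glin z‖ = ‖F (z : V)‖ := RCLike.norm_conj _
      _ ≤ ‖F‖ * ‖(z : V)‖ := F.le_opNorm _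
      _ = ‖F‖ * ‖z‖ := rfl)
  obtain ⟨m, hm⟩ : ∃ m : M, A m = (InnerProductSpace.toDual ℂ M).symm g := by
    have := hArange
    rw [LinearMap.range_eq_top] at this
    exact this _
  -- the key identity: B m z = F z for every z in M
  have hkey : ∀ z : M, B (m : V) (z : V) = F (z : V) := by
    intro z
    have h1 : inner ℂ (A m) z = g z := by
      rw [hm, InnerProductSpace.toDual_symm_apply]
    rw [hA] at h1
    have h2 : (starRingEnd ℂ) (B (m : V) (z : V)) = (starRingEnd ℂ) (F (z : V)) := h1
    exact (starRingEnd ℂ).injective h2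
  -- conclusion
  have hMform : ∀ z : M, (π (z : V)) ∈ Set.range ⇑π ∧ (z : V) = π (z : V) + K (π (z : V)) :=
    fun z => ⟨⟨(z : V), rfl⟩, (hMfix _ z.2).symm⟩
  refine ⟨π (m : V), ⟨⟨(m : V), rfl⟩, ?_⟩, ?_⟩
  · intro v hv
    have hm2 : π (m : V) + K (π (m : V)) = (m : V) := hMfix _ m.2
    rw [hm2]
    exact hkey ⟨v + K v, hmemM v hv⟩
  · rintro u' ⟨hu'mem, hu'eq⟩
    set m' : M := ⟨u' + K u', hmemM u' hu'mem⟩ with hm'def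
    have hm'key : ∀ z : M, B (m' : V) (z : V) = F (z : V) := by
      intro z
      obtain ⟨hz1, hz2⟩ := hMform z
      calc B (m' : V) (z : V) = B (u' + K u') (π (z : V) + K (π (z : V))) := by rw [← hz2]
        _ = F (π (z : V) + K (π (z : V))) := hu'eq _ hz1
        _ = F (z : V) := by rw [← hz2]
    have hAm' : A m' = A m := by
      refine ext_inner_right ℂ (fun z => ?_)
      rw [hA, hA, hm'key z, hkey z]
    have hmm : m' = m := hAinj hAm'
    have h1 : π (m' : V) = u' := by
      show π (u' + K u') = u'
      rw [map_add, hfix _ hu'mem, hK₀ _ hu'mem, add_zero]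
    rw [← h1, hmm]
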